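/- Let X be a locally solid f-algebra with multiplication unit e such that multiplication is continuous at zero, and suppose Orth_b(X) with the topology of uniform convergence on bounded sets has the Levi property. Then X has the Levi property. -/

import Mathlib

open Filter Topology Bornology Function Pointwise

/-- A set in a lattice-ordered group is solid if it contains every element
dominated in absolute value by one of its members. -/
def Solid {X : Type*} [Lattice X] [AddCommGroup X] (S : Set X) : Prop :=
  ∀ x y : X, |x| ≤ |y| → y ∈ S → x ∈ S

/-- The linear topology is locally solid: it admits a base at zero of solid sets. -/
def LocallySolid (X : Type*) [Lattice X] [AddCommGroup X] [TopologicalSpace X] : Prop :=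
  ∀ V ∈ 𝓝 (0 : X), ∃ U ∈ 𝓝 (0 : X), Solid U ∧ U ⊆ V

/-- Archimedean property of a vector lattice. -/
def ArchimedeanVL (X : Type*) [Lattice X] [AddCommGroup X] : Prop :=
  ∀ x y : X, (∀ n : ℕ, n • x ≤ y) → x ≤ 0

/-- A band preserving operator. -/
def BandPreserving {X : Type*} [Lattice X] [AddCommGroup X] [Module ℝ X]
    (T : X →ₗ[ℝ] X) : Prop :=
  ∀ x y : X, |x| ⊓ |y| = 0 → |T x| ⊓ |y| = 0

/-- An order bounded operator: it maps order intervals into order intervals. -/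
def OrderBounded {X : Type*} [Lattice X] [AddCommGroup X] [Module ℝ X]
    (T : X →ₗ[ℝ] X) : Prop :=
  ∀ a b : X, ∃ c d : X, T '' Set.Icc a b ⊆ Set.Icc c d

/-- An orthomorphism: an order bounded band preserving operator. -/
def Orthomorphism {X : Type*} [Lattice X] [AddCommGroup X] [Module ℝ X]
    (T : X →ₗ[ℝ] X) : Prop :=
  OrderBounded T ∧ BandPreserving T

/-- An `nb`-bounded operator: it maps some zero neighborhood to a topologically
bounded set. -/
def NbBounded {X : Type*} [Lattice X] [AddCommGroup X] [Module ℝ X]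
    [TopologicalSpace X] (T : X →ₗ[ℝ] X) : Prop :=
  ∃ U ∈ 𝓝 (0 : X), IsVonNBounded ℝ (T '' U)

/-- A `bb`-bounded operator: it maps topologically bounded sets to bounded sets. -/
def BbBounded {X : Type*} [Lattice X] [AddCommGroup X] [Module ℝ X]
    [TopologicalSpace X] (T : X →ₗ[ℝ] X) : Prop :=
  ∀ B : Set X, IsVonNBounded ℝ B → IsVonNBounded ℝ (T '' B)

/-- The Levi property: every topologically bounded upward directed set of positive
elements has a supremum. -/
def LeviProperty (X : Type*) [Lattice X] [AddCommGroup X] [Module ℝ X]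
    [TopologicalSpace X] : Prop :=
  ∀ B : Set X, B.Nonempty → IsVonNBounded ℝ B → (∀ x ∈ B, (0 : X) ≤ x) →
    DirectedOn (· ≤ ·) B → ∃ b : X, IsLUB B b

section Aux

variable {X : Type*} [Ring X] [Lattice X] [Module ℝ X]
    [IsScalarTower ℝ X X] [SMulCommClass ℝ X X]
    [TopologicalSpace X] [IsTopologicalAddGroup X] [ContinuousSMul ℝ X]
    [CovariantClass X X (· + ·) (· ≤ ·)]

/-- Uniform bound for products of two bounded sets. -/
lemma prod_bound
    (hmc : ∀ V ∈ 𝓝 (0 : X), ∃ U ∈ 𝓝 (0 : X), ∀ u ∈ U, ∀ x ∈ U, u * x ∈ V)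
    (A B : Set X) (hA : IsVonNBounded ℝ A) (hB : IsVonNBounded ℝ B)
    (V : Set X) (hV : V ∈ 𝓝 (0 : X)) :
    ∃ γ : ℝ, 0 < γ ∧ ∀ c : ℝ, γ ≤ ‖c‖ → ∀ a ∈ A, ∀ x ∈ B, a * x ∈ c • V := by
  obtain ⟨W, ⟨hW, hWbal⟩, hWV⟩ := (nhds_basis_balanced ℝ X).mem_iff.mp hV
  obtain ⟨U, hU, hUmul⟩ := hmc W hW
  obtain ⟨r, hr⟩ := (hA hU).exists
  obtain ⟨s, hs⟩ := (hB hU).exists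
  refine ⟨‖r * s‖ + 1, by positivity, fun c hc a ha x hx => ?_⟩
  obtain ⟨u, hu, rfl⟩ := hr ha
  obtain ⟨w, hw, rfl⟩ := hs hx
  have key : (r • u) * (s • w) = (r * s) • (u * w) := by
    rw [smul_mul_assoc, mul_smul_comm, smul_smul]
  rw [key]
  have h1 : (r * s) • (u * w) ∈ (r * s) • W := Set.smul_mem_smul_set (hUmul u hu w hw)
  have h2 : (r * s) • W ⊆ c • W :=
    hWbal.smul_mono (le_trans (le_add_of_nonneg_right zero_le_one) hc)
  exact Set.smul_set_mono hWV (h2 h1)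

lemma bbBounded_mulLeft
    (hmc : ∀ V ∈ 𝓝 (0 : X), ∃ U ∈ 𝓝 (0 : X), ∀ u ∈ U, ∀ x ∈ U, u * x ∈ V)
    (b : X) : BbBounded (LinearMap.mulLeft ℝ b) := by
  intro B hB V hV
  obtain ⟨γ, hγ, h⟩ := prod_bound hmc {b} B (Bornology.isVonNBounded_singleton b) hB V hV
  refine absorbs_iff_norm.mpr ⟨γ, fun c hc => ?_⟩
  rintro _ ⟨x, hx, rfl⟩
  exact h c hc b rfl x hx

lemma mulLeft_mono {b x y : X} (hmulpos : ∀ x y : X, 0 ≤ x → 0 ≤ y → 0 ≤ x * y)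
    (hb : 0 ≤ b) (hxy : x ≤ y) : b * x ≤ b * y := by
  have := hmulpos b (y - x) hb (sub_nonneg.mpr hxy)
  rw [mul_sub] at this
  exact sub_nonneg.mp this

lemma mulRight_mono {b x y : X} (hmulpos : ∀ x y : X, 0 ≤ x → 0 ≤ y → 0 ≤ x * y)
    (hb : 0 ≤ b) (hxy : x ≤ y) : x * b ≤ y * b := by
  have := hmulpos (y - x) b (sub_nonneg.mpr hxy) hb
  rw [sub_mul] at this
  exact sub_nonneg.mp this

lemma ortho_mulLeft
    (hfalg : ∀ x y : X, x ⊓ y = 0 → ∀ z : X, 0 ≤ z → (z * x) ⊓ y = 0 ∧ (x * z) ⊓ y = 0)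
    (hmulpos : ∀ x y : X, 0 ≤ x → 0 ≤ y → 0 ≤ x * y)
    {b : X} (hb : 0 ≤ b) : Orthomorphism (LinearMap.mulLeft ℝ b) := by
  constructor
  · intro a c
    refine ⟨b * a, b * c, ?_⟩
    rintro _ ⟨x, ⟨hax, hxc⟩, rfl⟩
    exact ⟨mulLeft_mono hmulpos hb hax, mulLeft_mono hmulpos hb hxc⟩
  · intro x y hxy
    have habs : |b * x| ≤ b * |x| := by
      have hx1 : x ≤ |x| := le_sup_left
      have hx2 : -x ≤ |x| := le_sup_right
      refine sup_le (mulLeft_mono hmulpos hb hx1) ?_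
      rw [← mul_neg]
      exact mulLeft_mono hmulpos hb hx2
    have h0 := (hfalg |x| |y| hxy b hb).1
    have hle : |b * x| ⊓ |y| ≤ (b * |x|) ⊓ |y| := inf_le_inf_right _ habs
    refine le_antisymm (h0 ▸ hle) (le_inf (abs_nonneg _) (abs_nonneg _))

lemma disjoint_mul_eq_zero
    (hfalg : ∀ x y : X, x ⊓ y = 0 → ∀ z : X, 0 ≤ z → (z * x) ⊓ y = 0 ∧ (x * z) ⊓ y = 0)
    (hmulpos : ∀ x y : X, 0 ≤ x → 0 ≤ y → 0 ≤ x * y)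
    {x y : X} (hx : 0 ≤ x) (hy : 0 ≤ y) (h : x ⊓ y = 0) : x * y = 0 := by
  have h1 : (x * y) ⊓ y = 0 := (hfalg x y h y hy).2
  have h2 : y ⊓ (x * y) = 0 := by rwa [inf_comm] at h1
  have h3 : (x * y) ⊓ (x * y) = 0 := (hfalg y (x * y) h2 x hx).1
  rwa [inf_idem] at h3

lemma one_nonneg'
    (hfalg : ∀ x y : X, x ⊓ y = 0 → ∀ z : X, 0 ≤ z → (z * x) ⊓ y = 0 ∧ (x * z) ⊓ y = 0)
    (hmulpos : ∀ x y : X, 0 ≤ x → 0 ≤ y → 0 ≤ x * y) : (0 : X) ≤ 1 := by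
  have hdisj : (1 : X)⁺ ⊓ (1 : X)⁻ = 0 := posPart_inf_negPart_eq_zero 1
  have hz : (1 : X)⁺ * (1 : X)⁻ = 0 :=
    disjoint_mul_eq_zero hfalg hmulpos (posPart_nonneg 1) (negPart_nonneg 1) hdisj
  have hdec : ((1 : X)⁺ - (1 : X)⁻) * (1 : X)⁻ = (1 : X)⁻ := by
    rw [posPart_sub_negPart, one_mul]
  rw [sub_mul, hz, zero_sub] at hdec
  have hnn : 0 ≤ (1 : X)⁻ * (1 : X)⁻ := hmulpos _ _ (negPart_nonneg 1) (negPart_nonneg 1)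
  have : (1 : X)⁻ ≤ 0 := by
    rw [← hdec]; exact neg_nonpos.mpr hnn
  have h0 : (1 : X)⁻ = 0 := le_antisymm this (negPart_nonneg 1)
  have hone : (1 : X) = (1 : X)⁺ - (1 : X)⁻ := (posPart_sub_negPart 1).symm
  rw [h0, sub_zero] at hone
  rw [hone]
  exact posPart_nonneg 1

end Aux

/-- if `X` is a locally solid `f`-algebra with unit whose
multiplication is continuous at zero and the space `Orth_b(X)` of `bb`-bounded
orthomorphisms (with the topology of uniform convergence on bounded sets and the
pointwise order) has the Levi property, then `X` has the Levi property. -/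
theorem levi_transfer {X : Type*} [Ring X] [Lattice X] [Module ℝ X]
    [IsScalarTower ℝ X X] [SMulCommClass ℝ X X]
    [TopologicalSpace X] [IsTopologicalAddGroup X] [ContinuousSMul ℝ X]
    [CovariantClass X X (· + ·) (· ≤ ·)]
    (hls : LocallySolid X)
    (hfalg : ∀ x y : X, x ⊓ y = 0 → ∀ z : X, 0 ≤ z → (z * x) ⊓ y = 0 ∧ (x * z) ⊓ y = 0)
    (hmulpos : ∀ x y : X, 0 ≤ x → 0 ≤ y → 0 ≤ x * y)
    (hmc : ∀ V ∈ 𝓝 (0 : X), ∃ U ∈ 𝓝 (0 : X), ∀ u ∈ U, ∀ x ∈ U, u * x ∈ V)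
    (hleviOrth : ∀ D : Set (X →ₗ[ℝ] X), D.Nonempty →
      (∀ T ∈ D, Orthomorphism T ∧ BbBounded T) →
      (∀ T ∈ D, ∀ x : X, 0 ≤ x → 0 ≤ T x) →
      DirectedOn (fun T S : X →ₗ[ℝ] X => ∀ x : X, 0 ≤ x → T x ≤ S x) D →
      (∀ B : Set X, IsVonNBounded ℝ B → ∀ V ∈ 𝓝 (0 : X),
        ∃ γ : ℝ, 0 < γ ∧ ∀ T ∈ D, T '' B ⊆ γ • V) →
      ∃ S : X →ₗ[ℝ] X, Orthomorphism S ∧ BbBounded S ∧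
        (∀ T ∈ D, ∀ x : X, 0 ≤ x → T x ≤ S x) ∧
        (∀ R : X →ₗ[ℝ] X, Orthomorphism R → BbBounded R →
          (∀ T ∈ D, ∀ x : X, 0 ≤ x → T x ≤ R x) → ∀ x : X, 0 ≤ x → S x ≤ R x)) :
    LeviProperty X := by
  intro B hBne hBbdd hBpos hBdir
  have h1 : (0 : X) ≤ 1 := one_nonneg' hfalg hmulpos
  set D : Set (X →ₗ[ℝ] X) := (fun b => LinearMap.mulLeft ℝ b) '' B with hD
  obtain ⟨b0, hb0⟩ := hBne
  have hDne : D.Nonempty := ⟨_, b0, hb0, rfl⟩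
  have hDortho : ∀ T ∈ D, Orthomorphism T ∧ BbBounded T := by
    rintro _ ⟨b, hb, rfl⟩
    exact ⟨ortho_mulLeft hfalg hmulpos (hBpos b hb), bbBounded_mulLeft hmc b⟩
  have hDpos : ∀ T ∈ D, ∀ x : X, 0 ≤ x → 0 ≤ T x := by
    rintro _ ⟨b, hb, rfl⟩ x hx
    exact hmulpos b x (hBpos b hb) hx
  have hDdir : DirectedOn (fun T S : X →ₗ[ℝ] X => ∀ x : X, 0 ≤ x → T x ≤ S x) D := by
    rintro _ ⟨b, hb, rfl⟩ _ ⟨c, hc, rfl⟩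
    obtain ⟨d, hd, hbd, hcd⟩ := hBdir b hb c hc
    exact ⟨_, ⟨d, hd, rfl⟩, fun x hx => mulRight_mono hmulpos hx hbd,
      fun x hx => mulRight_mono hmulpos hx hcd⟩
  have hDbdd : ∀ B' : Set X, IsVonNBounded ℝ B' → ∀ V ∈ 𝓝 (0 : X),
      ∃ γ : ℝ, 0 < γ ∧ ∀ T ∈ D, T '' B' ⊆ γ • V := by
    intro B' hB' V hV
    obtain ⟨γ, hγ, h⟩ := prod_bound hmc B B' hBbdd hB' V hV
    refine ⟨γ, hγ, ?_⟩
    rintro _ ⟨b, hb, rfl⟩ _ ⟨x, hx, rfl⟩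
    exact h γ (by rw [Real.norm_eq_abs, abs_of_pos hγ]) b hb x hx
  obtain ⟨S, hSortho, hSbb, hSub, hSmin⟩ := hleviOrth D hDne hDortho hDpos hDdir hDbdd
  refine ⟨S 1, ?_, ?_⟩
  · rintro b hb
    have := hSub _ ⟨b, hb, rfl⟩ 1 h1
    simpa using this
  · intro c hc
    have hcpos : 0 ≤ c := le_trans (hBpos b0 hb0) (hc hb0)
    have hRortho : Orthomorphism (LinearMap.mulLeft ℝ c) := ortho_mulLeft hfalg hmulpos hcpos
    have hRbb : BbBounded (LinearMap.mulLeft ℝ c) := bbBounded_mulLeft hmc c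
    have hRub : ∀ T ∈ D, ∀ x : X, 0 ≤ x → T x ≤ (LinearMap.mulLeft ℝ c) x := by
      rintro _ ⟨b, hb, rfl⟩ x hx
      exact mulRight_mono hmulpos hx (hc hb)
    have := hSmin _ hRortho hRbb hRub 1 h1
    simpa using this
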